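/- Let ν : [0,∞) → ℝ be locally integrable, and suppose there exists T ≥ 0 such that ν ∈ C¹[T,∞), ν(t) > 0 for t ∈ [T,∞), and −ν̇(t)/ν(t)² ≤ C for all t ∈ [T,∞) and some constant C. Then ∫₀^t ν(τ) dτ → +∞ as t → +∞. -/

import Mathlib

open Set Filter MeasureTheory

/-- **Divergence of the integral (Lemma 3.6).**
Let `ν : [0,∞) → ℝ` be locally integrable and suppose there are `T ≥ 0` and a constant `C`
such that `ν ∈ C¹[T,∞)`, `ν t > 0` on `[T,∞)` and `−ν̇ t / ν t ² ≤ C` on `[T,∞)`.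
Then `∫₀ᵗ ν → +∞` as `t → +∞`. -/
theorem integral_diverges_of_derivative_bound
    (ν : ℝ → ℝ) (ν' : ℝ → ℝ) (T C : ℝ) (hT : 0 ≤ T)
    (hloc : ∀ b : ℝ, IntervalIntegrable ν volume 0 b)
    (hd : ∀ t ∈ Ici T, HasDerivWithinAt ν (ν' t) (Ici T) t)
    (hd'c : ContinuousOn ν' (Ici T))
    (hpos : ∀ t ∈ Ici T, 0 < ν t)
    (hbound : ∀ t ∈ Ici T, -ν' t / ν t ^ 2 ≤ C) :
    Tendsto (fun t : ℝ => ∫ τ in (0 : ℝ)..t, ν τ) atTop atTop := by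
  set C' : ℝ := max C 1 with hC'
  have hC'pos : 0 < C' := lt_of_lt_of_le one_pos (le_max_right _ _)
  set a : ℝ := (ν T)⁻¹ with ha
  have haPos : 0 < a := inv_pos.mpr (hpos T (mem_Ici.mpr le_rfl))
  -- the function F τ = C' τ - (ν τ)⁻¹ is monotone on Ici T
  have hFmono : MonotoneOn (fun τ => C' * τ - (ν τ)⁻¹) (Ici T) := by
    apply monotoneOn_of_hasDerivWithinAt_nonneg (convex_Ici T)
      (f' := fun τ => C' - (-ν' τ / ν τ ^ 2))
    · intro x hx
      exact ((continuousAt_const.mul continuousAt_id).continuousWithinAt).sub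
        (((hd x hx).continuousWithinAt).inv₀ (hpos x hx).ne')
    · intro x hx
      rw [interior_Ici] at hx
      have h1 : HasDerivWithinAt (fun τ => (ν τ)⁻¹) (-ν' x / ν x ^ 2) (Ici T) x :=
        ((hd x (mem_Ici.mpr (le_of_lt hx))).inv (hpos x (mem_Ici.mpr (le_of_lt hx))).ne')
      exact (((hasDerivWithinAt_id x _).const_mul C').sub h1).mono
        (by rw [interior_Ici]; exact Ioi_subset_Ici_self) |>.congr_deriv (by ring)
    · intro x hx
      rw [interior_Ici] at hx
      have := hbound x (mem_Ici.mpr (le_of_lt hx))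
      have : -ν' x / ν x ^ 2 ≤ C' := le_trans this (le_max_left _ _)
      linarith
  -- pointwise lower bound on ν
  have hnu_lb : ∀ τ ∈ Ici T, (a + C' * (τ - T))⁻¹ ≤ ν τ := by
    intro τ hτ
    have h1 : C' * T - (ν T)⁻¹ ≤ C' * τ - (ν τ)⁻¹ := hFmono (mem_Ici.mpr le_rfl) hτ hτ
    have h2 : (ν τ)⁻¹ ≤ a + C' * (τ - T) := by rw [ha]; linarith
    have h3 : 0 < (ν τ)⁻¹ := inv_pos.mpr (hpos τ hτ)
    calc (a + C' * (τ - T))⁻¹ ≤ ((ν τ)⁻¹)⁻¹ := by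
          exact inv_anti₀ h3 h2
      _ = ν τ := inv_inv _
  -- FTC for the comparison function
  set G : ℝ → ℝ := fun t => Real.log (a + C' * (t - T)) / C' with hG
  have hGd : ∀ τ ∈ Ici T, HasDerivAt G ((a + C' * (τ - T))⁻¹) τ := by
    intro τ hτ
    have hden : 0 < a + C' * (τ - T) := by
      have hτ' : T ≤ τ := mem_Ici.mp hτ
      have : 0 ≤ C' * (τ - T) := mul_nonneg hC'pos.le (by linarith)
      linarith
    have hu : HasDerivAt (fun t => a + C' * (t - T)) C' τ := by
      simpa using ((hasDerivAt_id τ).sub_const T).const_mul C' |>.const_add a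
    have h := (hu.log hden.ne').div_const C'
    have heq : C' / (a + C' * (τ - T)) / C' = (a + C' * (τ - T))⁻¹ := by
      field_simp
    rw [heq] at h
    exact h
  have hGint : ∀ t ≥ T, ∫ τ in T..t, (a + C' * (τ - T))⁻¹ = G t - G T := by
    intro t ht
    apply intervalIntegral.integral_eq_sub_of_hasDerivAt
    · intro τ hτ
      rw [uIcc_of_le ht] at hτ
      exact hGd τ hτ.1
    · apply ContinuousOn.intervalIntegrable
      apply ContinuousOn.inv₀
      · fun_prop
      · intro τ hτ
        rw [uIcc_of_le ht] at hτ
        have : 0 ≤ C' * (τ - T) := mul_nonneg hC'pos.le (by linarith [hτ.1])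
        positivity
  -- comparison of integrals for t ≥ T
  have hkey : ∀ t ≥ T, (∫ τ in (0:ℝ)..T, ν τ) + (G t - G T) ≤ ∫ τ in (0:ℝ)..t, ν τ := by
    intro t ht
    have hι : IntervalIntegrable ν volume T t := (hloc T).symm.trans (hloc t)
    have hsplit : (∫ τ in (0:ℝ)..T, ν τ) + (∫ τ in T..t, ν τ) = ∫ τ in (0:ℝ)..t, ν τ :=
      intervalIntegral.integral_add_adjacent_intervals (hloc T) hι
    have hgι : IntervalIntegrable (fun τ => (a + C' * (τ - T))⁻¹) volume T t := by
      apply ContinuousOn.intervalIntegrable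
      apply ContinuousOn.inv₀
      · fun_prop
      · intro τ hτ
        rw [uIcc_of_le ht] at hτ
        have : 0 ≤ C' * (τ - T) := mul_nonneg hC'pos.le (by linarith [hτ.1])
        positivity
    have hcmp : (∫ τ in T..t, (a + C' * (τ - T))⁻¹) ≤ ∫ τ in T..t, ν τ := by
      apply intervalIntegral.integral_mono_on ht hgι hι
      intro τ hτ
      exact hnu_lb τ hτ.1
    rw [← hsplit, ← hGint t ht]
    linarith
  -- the lower bound tends to infinity
  have hGtop : Tendsto (fun t => (∫ τ in (0:ℝ)..T, ν τ) + (G t - G T)) atTop atTop := by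
    apply tendsto_atTop_add_const_left
    apply tendsto_atTop_add_const_right
    apply Tendsto.atTop_div_const hC'pos
    apply Real.tendsto_log_atTop.comp
    apply tendsto_atTop_add_const_left
    exact (tendsto_atTop_add_const_right _ _ tendsto_id).const_mul_atTop hC'pos
  exact tendsto_atTop_mono' atTop
    ((eventually_ge_atTop T).mono fun t ht => hkey t ht) hGtop
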